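/- arXiv:2009.02842 — 8 statements merged into one kernel-verified Lean document; each statement's English description precedes it below -/
import Mathlib

section
/- If L is an even integral lattice with minimal norm m0, x' ∈ L is a minimal-norm representative of its class modulo the sublattice generated by vectors of norms m0 and m0+2, with (x',x') > m0+2, and x ∈ L has norm m0+2, then |(x,x')| ≤ m0/2 + 1. -/
open scoped RealInnerProductSpace

/-- In an even integral lattice `L ⊂ ℝⁿ` with minimal norm `m0`,
if `x'` is a minimal-norm representative of its class modulo the sublattice
generated by vectors of norms `m0` and `m0 + 2`, with `(x',x') > m0 + 2`, then
every `x ∈ L` of norm `m0 + 2` satisfies `|(x,x')| ≤ m0/2 + 1`. -/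
theorem norm_m0_add_two_inner_bound (n : ℕ)
    (L : Submodule ℤ (EuclideanSpace ℝ (Fin n)))
    (hfull : Submodule.span ℝ (L : Set (EuclideanSpace ℝ (Fin n))) = ⊤)
    (hint : ∀ x ∈ L, ∀ y ∈ L, ∃ k : ℤ, ⟪x, y⟫ = (k : ℝ))
    (heven : ∀ x ∈ L, ∃ k : ℤ, ⟪x, x⟫ = 2 * (k : ℝ))
    (m0 : ℝ)
    (hm0 : ∃ v ∈ L, v ≠ 0 ∧ ⟪v, v⟫ = m0)
    (hm0min : ∀ v ∈ L, v ≠ 0 → m0 ≤ ⟪v, v⟫)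
    (x' : EuclideanSpace ℝ (Fin n)) (hx'L : x' ∈ L)
    (hx'min : ∀ y ∈ L,
      y - x' ∈ Submodule.span ℤ
        {v | v ∈ L ∧ (⟪v, v⟫ = m0 ∨ ⟪v, v⟫ = m0 + 2)} →
      ⟪x', x'⟫ ≤ ⟪y, y⟫)
    (hs : m0 + 2 < ⟪x', x'⟫)
    (x : EuclideanSpace ℝ (Fin n)) (hxL : x ∈ L) (hxm : ⟪x, x⟫ = m0 + 2) :
    |⟪x, x'⟫| ≤ m0 / 2 + 1 := by
  have hxS : x ∈ Submodule.span ℤ {v | v ∈ L ∧ (⟪v, v⟫ = m0 ∨ ⟪v, v⟫ = m0 + 2)} :=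
    Submodule.subset_span ⟨hxL, Or.inr hxm⟩
  have h1 := hx'min (x' - x) (L.sub_mem hx'L hxL)
    (by simpa [sub_sub_cancel_left] using Submodule.neg_mem _ hxS)
  have h2 := hx'min (x' + x) (L.add_mem hx'L hxL)
    (by simpa [add_sub_cancel_left] using hxS)
  rw [real_inner_sub_sub_self] at h1
  rw [real_inner_add_add_self] at h2
  rw [show (inner ℝ x x' : ℝ) = inner ℝ x' x from real_inner_comm x' x]
  rw [abs_le]
  constructor <;> linarith
end

section
/- The polynomial P(x) = (x,x')^4 - (3/14)(x,x')^2(x',x')(x,x) + (3/728)(x',x')^2(x,x)^2 on R^24 is harmonic (its Laplacian vanishes identically) for every fixed x' ∈ R^24. -/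
open scoped RealInnerProductSpace

private lemma inner_self_hasFDerivAt (y : EuclideanSpace ℝ (Fin 24)) :
    HasFDerivAt (fun z : EuclideanSpace ℝ (Fin 24) => ⟪z, z⟫) ((2:ℝ) • innerSL ℝ y) y := by
  have h := (hasFDerivAt_id y).inner ℝ (hasFDerivAt_id y)
  refine h.congr_fderiv ?_
  ext v
  simp [fderivInnerCLM_apply, real_inner_comm, two_smul, mul_comm]

/-- `P(x) = (x,x')⁴ - (3/14)(x,x')²(x',x')(x,x) + (3/728)(x',x')²(x,x)²`
on `ℝ²⁴` is harmonic for every fixed `x'`. -/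
theorem harmonic_deg4_dim24 (x' : EuclideanSpace ℝ (Fin 24)) :
    let P : EuclideanSpace ℝ (Fin 24) → ℝ := fun x =>
      ⟪x, x'⟫ ^ 4 - (3 / 14) * ⟪x, x'⟫ ^ 2 * ⟪x', x'⟫ * ⟪x, x⟫
        + (3 / 728) * ⟪x', x'⟫ ^ 2 * ⟪x, x⟫ ^ 2
    ∀ x : EuclideanSpace ℝ (Fin 24),
      (∑ i : Fin 24,
        fderiv ℝ (fun y => fderiv ℝ P y (EuclideanSpace.single i 1)) x
          (EuclideanSpace.single i 1)) = 0 := by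
  intro P x
  -- first derivative
  have hfd : ∀ (y v : EuclideanSpace ℝ (Fin 24)),
      fderiv ℝ P y v
        = (4 * (⟪x', y⟫ * (⟪x', y⟫ * ⟪x', y⟫)) - 3 / 7 * ⟪x', x'⟫ * (⟪x', y⟫ * ⟪y, y⟫)) * ⟪x', v⟫
          + (-(3 / 7) * ⟪x', x'⟫ * (⟪x', y⟫ * ⟪x', y⟫)
              + 3 / 182 * ⟪x', x'⟫ ^ 2 * ⟪y, y⟫) * ⟪v, y⟫ := by
    intro y v
    have hs : HasFDerivAt (fun z : EuclideanSpace ℝ (Fin 24) => ⟪x', z⟫) (innerSL ℝ x') y :=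
      (innerSL ℝ x').hasFDerivAt
    have hn := inner_self_hasFDerivAt y
    have H := (((hs.mul hs).mul (hs.mul hs)).sub
        (((((hs.mul hs).const_mul ((3:ℝ)/14)).mul_const ⟪x', x'⟫)).mul hn)).add
      ((hn.mul hn).const_mul ((3:ℝ)/728 * ⟪x', x'⟫ ^ 2))
    have HP := H.congr_of_eventuallyEq (Filter.Eventually.of_forall
      (fun z => show P z = _ by
        simp only [P, Pi.mul_apply, Pi.add_apply, Pi.sub_apply]; rw [real_inner_comm x' z]; ring))
    rw [HP.fderiv]
    simp only [ContinuousLinearMap.add_apply, ContinuousLinearMap.sub_apply,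
      ContinuousLinearMap.smul_apply, ContinuousLinearMap.coe_smul', Pi.smul_apply,
      innerSL_apply_apply, smul_eq_mul, Pi.mul_apply]
    rw [real_inner_comm y v]
    ring
  -- second derivative in direction `single i 1`
  have h2 : ∀ i : Fin 24,
      fderiv ℝ (fun y => fderiv ℝ P y (EuclideanSpace.single i 1)) x (EuclideanSpace.single i 1)
        = (12 * ⟪x', x⟫ ^ 2 - 3 / 7 * ⟪x', x'⟫ * ⟪x, x⟫) * (x' i * x' i)
          + (-(12 / 7) * ⟪x', x'⟫ * ⟪x', x⟫) * (x' i * x i)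
          + 6 / 182 * ⟪x', x'⟫ ^ 2 * (x i * x i)
          + (-(3 / 7) * ⟪x', x'⟫ * ⟪x', x⟫ ^ 2 + 3 / 182 * ⟪x', x'⟫ ^ 2 * ⟪x, x⟫) := by
    intro i
    set v : EuclideanSpace ℝ (Fin 24) := EuclideanSpace.single i (1:ℝ) with hv'
    have hg : (fun y => fderiv ℝ P y v)
        = (fun y : EuclideanSpace ℝ (Fin 24) =>
            (4 * (⟪x', y⟫ * (⟪x', y⟫ * ⟪x', y⟫)) - 3 / 7 * ⟪x', x'⟫ * (⟪x', y⟫ * ⟪y, y⟫)) * ⟪x', v⟫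
              + (-(3 / 7) * ⟪x', x'⟫ * (⟪x', y⟫ * ⟪x', y⟫)
                  + 3 / 182 * ⟪x', x'⟫ ^ 2 * ⟪y, y⟫) * ⟪v, y⟫) :=
      funext fun y => hfd y v
    rw [hg]
    have hs : HasFDerivAt (fun z : EuclideanSpace ℝ (Fin 24) => ⟪x', z⟫) (innerSL ℝ x') x :=
      (innerSL ℝ x').hasFDerivAt
    have hvv : HasFDerivAt (fun z : EuclideanSpace ℝ (Fin 24) => ⟪v, z⟫) (innerSL ℝ v) x :=
      (innerSL ℝ v).hasFDerivAt
    have hn := inner_self_hasFDerivAt x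
    have H := ((((hs.mul (hs.mul hs)).const_mul (4:ℝ)).sub
          ((hs.mul hn).const_mul ((3:ℝ)/7 * ⟪x', x'⟫))).mul_const ⟪x', v⟫).add
      (((((hs.mul hs).const_mul (-(3/7 : ℝ) * ⟪x', x'⟫)).add
          (hn.const_mul ((3:ℝ)/182 * ⟪x', x'⟫ ^ 2))).mul hvv))
    have H' : HasFDerivAt (fun y : EuclideanSpace ℝ (Fin 24) =>
              (4 * (⟪x', y⟫ * (⟪x', y⟫ * ⟪x', y⟫)) - 3 / 7 * ⟪x', x'⟫ * (⟪x', y⟫ * ⟪y, y⟫)) * ⟪x', v⟫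
                + (-(3 / 7) * ⟪x', x'⟫ * (⟪x', y⟫ * ⟪x', y⟫)
                    + 3 / 182 * ⟪x', x'⟫ ^ 2 * ⟪y, y⟫) * ⟪v, y⟫) _ x := H
    rw [H'.fderiv]
    have h1 : ⟪x', v⟫ = x' i := by simp [hv', EuclideanSpace.inner_single_right]
    have h2 : ⟪v, x⟫ = x i := by simp [hv', EuclideanSpace.inner_single_left]
    have h3 : ⟪v, v⟫ = 1 := by simp [hv', EuclideanSpace.inner_single_left]
    have h4 : ⟪x, v⟫ = x i := by rw [real_inner_comm]; exact h2
    simp only [ContinuousLinearMap.add_apply, ContinuousLinearMap.sub_apply,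
      ContinuousLinearMap.smul_apply, ContinuousLinearMap.coe_smul', Pi.smul_apply,
      innerSL_apply_apply, smul_eq_mul, Pi.mul_apply, Pi.add_apply, Pi.sub_apply]
    rw [h1, h2, h3, h4]
    ring
  rw [Finset.sum_congr rfl fun i _ => h2 i]
  have e1 : ∑ i, x' i * x' i = ⟪x', x'⟫ := by rw [PiLp.inner_apply]; simp [mul_comm, sq]
  have e2 : ∑ i, x' i * x i = ⟪x', x⟫ := by rw [PiLp.inner_apply]; simp [mul_comm]
  have e3 : ∑ i, x i * x i = ⟪x, x⟫ := by rw [PiLp.inner_apply]; simp [mul_comm, sq]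
  simp only [Finset.sum_add_distrib, ← Finset.mul_sum, e1, e2, e3, Finset.sum_const,
    Finset.card_univ, Fintype.card_fin, nsmul_eq_mul]
  ring
end

section
/- The polynomial P(x) = (x,x')^6 - (15/32)(x,x')^4(x',x')(x,x) + (3/64)(x,x')^2(x',x')^2(x,x)^2 - (1/1792)(x',x')^3(x,x)^3 on R^24 is harmonic for every fixed x' ∈ R^24. -/
open scoped RealInnerProductSpace

variable {F : Type*} [NormedAddCommGroup F] [InnerProductSpace ℝ F]

lemma myhpow {f : F → ℝ} {f' : F →L[ℝ] ℝ} {x : F} (hf : HasFDerivAt f f' x) :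
    ∀ n : ℕ, HasFDerivAt (fun y => f y ^ n) (((n : ℝ) * f x ^ (n - 1)) • f') x
  | 0 => by simpa using hasFDerivAt_const (1 : ℝ) x
  | (n + 1) => by
      have h := (myhpow hf n).mul hf
      have hfun : (fun y => f y ^ (n + 1)) = fun y => f y ^ n * f y := by
        funext y; rw [pow_succ]
      rw [hfun]
      refine HasFDerivAt.congr_fderiv h ?_
      ext w
      cases n with
      | zero => simp
      | succ m =>
        simp only [ContinuousLinearMap.add_apply, ContinuousLinearMap.smul_apply,
          smul_eq_mul, Nat.add_sub_cancel, Nat.cast_add, Nat.cast_one]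
        rw [pow_succ]
        ring

lemma ha_deriv (v x : F) : HasFDerivAt (fun y : F => ⟪y, v⟫) (innerSL ℝ v) x := by
  have h := (innerSL ℝ v).hasFDerivAt (x := x)
  have e : ⇑(innerSL ℝ v) = fun y : F => ⟪y, v⟫ := funext fun y => by
    simp [real_inner_comm]
  rwa [e] at h

lemma hb_deriv (x : F) : HasFDerivAt (fun y : F => ⟪y, y⟫) (2 • innerSL ℝ x) x := by
  have h := (hasFDerivAt_id x).inner ℝ (hasFDerivAt_id x)
  refine h.congr_fderiv ?_
  ext w
  simp [fderivInnerCLM_apply, real_inner_comm, two_mul]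

theorem aux24 (x' x : EuclideanSpace ℝ (Fin 24)) :
    (∑ i : Fin 24,
      fderiv ℝ (fun y => fderiv ℝ (fun z : EuclideanSpace ℝ (Fin 24) =>
        ⟪z, x'⟫ ^ 6 - (15 / 32) * ⟪z, x'⟫ ^ 4 * ⟪x', x'⟫ * ⟪z, z⟫
          + (3 / 64) * ⟪z, x'⟫ ^ 2 * ⟪x', x'⟫ ^ 2 * ⟪z, z⟫ ^ 2
          - (1 / 1792) * ⟪x', x'⟫ ^ 3 * ⟪z, z⟫ ^ 3) y (EuclideanSpace.single i 1)) x
        (EuclideanSpace.single i 1)) = 0 := by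
  -- first derivative
  have key : ∀ (y w : EuclideanSpace ℝ (Fin 24)),
      fderiv ℝ (fun z : EuclideanSpace ℝ (Fin 24) =>
        ⟪z, x'⟫ ^ 6 - (15 / 32) * ⟪z, x'⟫ ^ 4 * ⟪x', x'⟫ * ⟪z, z⟫
          + (3 / 64) * ⟪z, x'⟫ ^ 2 * ⟪x', x'⟫ ^ 2 * ⟪z, z⟫ ^ 2
          - (1 / 1792) * ⟪x', x'⟫ ^ 3 * ⟪z, z⟫ ^ 3) y w =
      (6 * ⟪y, x'⟫ ^ 5 - (15 / 8) * ⟪y, x'⟫ ^ 3 * ⟪x', x'⟫ * ⟪y, y⟫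
        + (3 / 32) * ⟪y, x'⟫ * ⟪x', x'⟫ ^ 2 * ⟪y, y⟫ ^ 2) * ⟪x', w⟫
      + (-(15 / 16) * ⟪y, x'⟫ ^ 4 * ⟪x', x'⟫ + (3 / 16) * ⟪y, x'⟫ ^ 2 * ⟪x', x'⟫ ^ 2 * ⟪y, y⟫
        - (3 / 896) * ⟪x', x'⟫ ^ 3 * ⟪y, y⟫ ^ 2) * ⟪y, w⟫ := by
    intro y w
    have ha := ha_deriv x' y
    have hb := hb_deriv y
    have h1 := myhpow ha 6
    have h2 := (((myhpow ha 4).const_mul (15 / 32 : ℝ)).mul_const ⟪x', x'⟫).mul hb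
    have h3 := (((myhpow ha 2).const_mul (3 / 64 : ℝ)).mul_const (⟪x', x'⟫ ^ 2)).mul
      (myhpow hb 2)
    have h4 := (myhpow hb 3).const_mul ((1 / 1792 : ℝ) * ⟪x', x'⟫ ^ 3)
    have hP := ((h1.sub h2).add h3).sub h4
    erw [hP.fderiv]
    simp only [ContinuousLinearMap.coe_sub', ContinuousLinearMap.coe_add', Pi.sub_apply,
      Pi.add_apply, ContinuousLinearMap.add_apply, ContinuousLinearMap.sub_apply,
      ContinuousLinearMap.smul_apply, innerSL_apply_apply, smul_eq_mul]
    push_cast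
    ring
  -- second derivative, direction i
  have key2 : ∀ i : Fin 24,
      fderiv ℝ (fun y => fderiv ℝ (fun z : EuclideanSpace ℝ (Fin 24) =>
        ⟪z, x'⟫ ^ 6 - (15 / 32) * ⟪z, x'⟫ ^ 4 * ⟪x', x'⟫ * ⟪z, z⟫
          + (3 / 64) * ⟪z, x'⟫ ^ 2 * ⟪x', x'⟫ ^ 2 * ⟪z, z⟫ ^ 2
          - (1 / 1792) * ⟪x', x'⟫ ^ 3 * ⟪z, z⟫ ^ 3) y (EuclideanSpace.single i 1)) x
        (EuclideanSpace.single i 1) =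
      (30 * ⟪x, x'⟫ ^ 4 - (45 / 8) * ⟪x, x'⟫ ^ 2 * ⟪x', x'⟫ * ⟪x, x⟫
        + (3 / 32) * ⟪x', x'⟫ ^ 2 * ⟪x, x⟫ ^ 2) * (x' i * x' i)
      + (-(15 / 2) * ⟪x, x'⟫ ^ 3 * ⟪x', x'⟫ + (3 / 4) * ⟪x, x'⟫ * ⟪x', x'⟫ ^ 2 * ⟪x, x⟫)
          * (x i * x' i)
      + ((3 / 8) * ⟪x, x'⟫ ^ 2 * ⟪x', x'⟫ ^ 2 - (3 / 224) * ⟪x', x'⟫ ^ 3 * ⟪x, x⟫)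
          * (x i * x i)
      + (-(15 / 16) * ⟪x, x'⟫ ^ 4 * ⟪x', x'⟫ + (3 / 16) * ⟪x, x'⟫ ^ 2 * ⟪x', x'⟫ ^ 2 * ⟪x, x⟫
        - (3 / 896) * ⟪x', x'⟫ ^ 3 * ⟪x, x⟫ ^ 2) := by
    intro i
    have hfun : (fun y => fderiv ℝ (fun z : EuclideanSpace ℝ (Fin 24) =>
        ⟪z, x'⟫ ^ 6 - (15 / 32) * ⟪z, x'⟫ ^ 4 * ⟪x', x'⟫ * ⟪z, z⟫
          + (3 / 64) * ⟪z, x'⟫ ^ 2 * ⟪x', x'⟫ ^ 2 * ⟪z, z⟫ ^ 2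
          - (1 / 1792) * ⟪x', x'⟫ ^ 3 * ⟪z, z⟫ ^ 3) y (EuclideanSpace.single i 1)) =
        fun y : EuclideanSpace ℝ (Fin 24) =>
      (6 * ⟪y, x'⟫ ^ 5 - (15 / 8) * ⟪y, x'⟫ ^ 3 * ⟪x', x'⟫ * ⟪y, y⟫
        + (3 / 32) * ⟪y, x'⟫ * ⟪x', x'⟫ ^ 2 * ⟪y, y⟫ ^ 2) * ⟪x', EuclideanSpace.single i 1⟫
      + (-(15 / 16) * ⟪y, x'⟫ ^ 4 * ⟪x', x'⟫ + (3 / 16) * ⟪y, x'⟫ ^ 2 * ⟪x', x'⟫ ^ 2 * ⟪y, y⟫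
        - (3 / 896) * ⟪x', x'⟫ ^ 3 * ⟪y, y⟫ ^ 2) * ⟪y, EuclideanSpace.single i 1⟫ :=
      funext fun y => key y _
    rw [hfun]
    have ha := ha_deriv x' x
    have hb := hb_deriv x
    have hei := ha_deriv (EuclideanSpace.single i 1) x
    -- first big bracket * constant
    have g1 := ((((myhpow ha 5).const_mul (6 : ℝ)).sub
        ((((myhpow ha 3).const_mul (15 / 8 : ℝ)).mul_const ⟪x', x'⟫).mul hb)).add
        ((ha.const_mul (3 / 32 : ℝ)).mul_const (⟪x', x'⟫ ^ 2) |>.mul (myhpow hb 2))).mul_const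
        (⟪x', EuclideanSpace.single i 1⟫ : ℝ)
    have g2 := ((((myhpow ha 4).const_mul (-(15 / 16) : ℝ)).mul_const ⟪x', x'⟫).add
        ((((myhpow ha 2).const_mul (3 / 16 : ℝ)).mul_const (⟪x', x'⟫ ^ 2)).mul hb) |>.sub
        ((myhpow hb 2).const_mul ((3 / 896 : ℝ) * ⟪x', x'⟫ ^ 3))).mul hei
    have hG := g1.add g2
    erw [hG.fderiv]
    simp only [ContinuousLinearMap.coe_sub', ContinuousLinearMap.coe_add', Pi.sub_apply,
      Pi.add_apply, ContinuousLinearMap.add_apply, ContinuousLinearMap.sub_apply,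
      ContinuousLinearMap.smul_apply, ContinuousLinearMap.smulRight_apply,
      innerSL_apply_apply, smul_eq_mul, Pi.mul_apply]
    have e1 : ⟪x', EuclideanSpace.single i 1⟫ = x' i := by
      simp [EuclideanSpace.inner_single_right]
    have e2 : ⟪x, EuclideanSpace.single i 1⟫ = x i := by
      simp [EuclideanSpace.inner_single_right]
    have e3 : ⟪(EuclideanSpace.single i 1 : EuclideanSpace ℝ (Fin 24)),
        EuclideanSpace.single i 1⟫ = (1 : ℝ) := by
      simp [EuclideanSpace.inner_single_right, EuclideanSpace.single_apply]
    rw [e1, e2, e3]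
    push_cast
    ring
  simp only [key2, Finset.sum_add_distrib, ← Finset.mul_sum, Finset.sum_const,
    Finset.card_univ, Fintype.card_fin, nsmul_eq_mul]
  have s1 : ∑ i : Fin 24, x' i * x' i = ⟪x', x'⟫ := by
    rw [PiLp.inner_apply]; exact Finset.sum_congr rfl fun i _ => by simp [mul_comm]; ring
  have s2 : ∑ i : Fin 24, x i * x' i = ⟪x, x'⟫ := by
    rw [PiLp.inner_apply]; exact Finset.sum_congr rfl fun i _ => by simp [mul_comm]
  have s3 : ∑ i : Fin 24, x i * x i = ⟪x, x⟫ := by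
    rw [PiLp.inner_apply]; exact Finset.sum_congr rfl fun i _ => by simp [mul_comm]; ring
  rw [s1, s2, s3]
  ring


/-- the degree-6 polynomial on ℝ²⁴ is harmonic for every fixed x'. -/
theorem harmonic_deg6_dim24 (x' : EuclideanSpace ℝ (Fin 24)) :
    let P : EuclideanSpace ℝ (Fin 24) → ℝ := fun x =>
      ⟪x, x'⟫ ^ 6 - (15 / 32) * ⟪x, x'⟫ ^ 4 * ⟪x', x'⟫ * ⟪x, x⟫
        + (3 / 64) * ⟪x, x'⟫ ^ 2 * ⟪x', x'⟫ ^ 2 * ⟪x, x⟫ ^ 2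
        - (1 / 1792) * ⟪x', x'⟫ ^ 3 * ⟪x, x⟫ ^ 3
    ∀ x : EuclideanSpace ℝ (Fin 24),
      (∑ i : Fin 24,
        fderiv ℝ (fun y => fderiv ℝ P y (EuclideanSpace.single i 1)) x
          (EuclideanSpace.single i 1)) = 0 := by
  intro P x
  exact aux24 x' x
end

section
/- The polynomial P(x) = (x,x')^6 - (15/44)(x,x')^4(x',x')(x,x) + (15/616)(x,x')^2(x',x')^2(x,x)^2 - (1/4928)(x',x')^3(x,x)^3 on R^36 is harmonic for every fixed x' ∈ R^36. -/
open scoped RealInnerProductSpace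

noncomputable abbrev E36 := EuclideanSpace ℝ (Fin 36)

lemma aux1 (w y : E36) : HasFDerivAt (fun x : E36 => ⟪x, w⟫) (innerSL ℝ w) y := by
  have h : (fun x : E36 => ⟪x, w⟫) = fun x => innerSL ℝ w x := by
    funext z; simp only [PiLp.inner_apply, RCLike.inner_apply, conj_trivial, innerSL_apply_apply]
    exact Finset.sum_congr rfl fun i _ => mul_comm _ _
  rw [h]; exact (innerSL ℝ w).hasFDerivAt

lemma aux2 (y : E36) : HasFDerivAt (fun x : E36 => ⟪x, x⟫) ((2 : ℝ) • innerSL ℝ y) y := by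
  have h := (hasFDerivAt_id y).inner ℝ (hasFDerivAt_id y)
  refine h.congr_fderiv ?_
  ext v
  simp [fderivInnerCLM_apply, two_mul]
  exact real_inner_comm _ _

lemma auxpow {f : E36 → ℝ} {f' : E36 →L[ℝ] ℝ} {x : E36} (h : HasFDerivAt f f' x) (n : ℕ) :
    HasFDerivAt (fun x => f x ^ n) (((n : ℝ) * f x ^ (n - 1)) • f') x :=
  (hasDerivAt_pow n (f x)).comp_hasFDerivAt x h

lemma fderivP (x' y v : E36) :
    fderiv ℝ (fun x : E36 =>
      ⟪x, x'⟫ ^ 6 - (15 / 44) * ⟪x, x'⟫ ^ 4 * ⟪x', x'⟫ * ⟪x, x⟫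
        + (15 / 616) * ⟪x, x'⟫ ^ 2 * ⟪x', x'⟫ ^ 2 * ⟪x, x⟫ ^ 2
        - (1 / 4928) * ⟪x', x'⟫ ^ 3 * ⟪x, x⟫ ^ 3) y v =
      (6 * ⟪y, x'⟫ ^ 5 - (15 / 11) * ⟪y, x'⟫ ^ 3 * ⟪x', x'⟫ * ⟪y, y⟫
        + (15 / 308) * ⟪y, x'⟫ * ⟪x', x'⟫ ^ 2 * ⟪y, y⟫ ^ 2) * ⟪x', v⟫
      + (-(15 / 44) * ⟪y, x'⟫ ^ 4 * ⟪x', x'⟫ + (15 / 308) * ⟪y, x'⟫ ^ 2 * ⟪x', x'⟫ ^ 2 * ⟪y, y⟫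
        - (3 / 4928) * ⟪x', x'⟫ ^ 3 * ⟪y, y⟫ ^ 2) * (2 * ⟪y, v⟫) := by
  have hs := aux1 x' y
  have hq := aux2 y
  have H := (((auxpow hs 6).sub ((((auxpow hs 4).const_mul (15/44)).mul_const
      (⟪x', x'⟫ : ℝ)).mul hq)).add ((((auxpow hs 2).const_mul (15/616)).mul_const
      ((⟪x', x'⟫ : ℝ)^2)).mul (auxpow hq 2))).sub
      ((auxpow hq 3).const_mul ((1/4928) * (⟪x', x'⟫ : ℝ)^3))
  erw [H.fderiv]
  simp
  ring

lemma fderiv2 (x' v x : E36) :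
    fderiv ℝ (fun y : E36 =>
      (6 * ⟪y, x'⟫ ^ 5 - (15 / 11) * ⟪y, x'⟫ ^ 3 * ⟪x', x'⟫ * ⟪y, y⟫
        + (15 / 308) * ⟪y, x'⟫ * ⟪x', x'⟫ ^ 2 * ⟪y, y⟫ ^ 2) * ⟪x', v⟫
      + (-(15 / 44) * ⟪y, x'⟫ ^ 4 * ⟪x', x'⟫ + (15 / 308) * ⟪y, x'⟫ ^ 2 * ⟪x', x'⟫ ^ 2 * ⟪y, y⟫
        - (3 / 4928) * ⟪x', x'⟫ ^ 3 * ⟪y, y⟫ ^ 2) * (2 * ⟪y, v⟫)) x v =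
      (30 * ⟪x, x'⟫ ^ 4 - (45/11) * ⟪x, x'⟫ ^ 2 * ⟪x', x'⟫ * ⟪x, x⟫
        + (15/308) * ⟪x', x'⟫ ^ 2 * ⟪x, x⟫ ^ 2) * (⟪x', v⟫ * ⟪x', v⟫)
      + 4 * (-(15/11) * ⟪x, x'⟫ ^ 3 * ⟪x', x'⟫ + (15/154) * ⟪x, x'⟫ * ⟪x', x'⟫ ^ 2 * ⟪x, x⟫)
          * (⟪x, v⟫ * ⟪x', v⟫)
      + 4 * ((15/308) * ⟪x, x'⟫ ^ 2 * ⟪x', x'⟫ ^ 2 - (3/2464) * ⟪x', x'⟫ ^ 3 * ⟪x, x⟫)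
          * (⟪x, v⟫ * ⟪x, v⟫)
      + 2 * (-(15/44) * ⟪x, x'⟫ ^ 4 * ⟪x', x'⟫ + (15/308) * ⟪x, x'⟫ ^ 2 * ⟪x', x'⟫ ^ 2 * ⟪x, x⟫
        - (3/4928) * ⟪x', x'⟫ ^ 3 * ⟪x, x⟫ ^ 2) * ⟪v, v⟫ := by
  have hs := aux1 x' x
  have hq := aux2 x
  have hl := aux1 v x
  have HA := ((((auxpow hs 5).const_mul 6).sub ((((auxpow hs 3).const_mul (15/11)).mul_const
      ((⟪x', x'⟫ : ℝ))).mul hq)).add (((hs.const_mul (15/308)).mul_const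
      ((⟪x', x'⟫ : ℝ)^2)).mul (auxpow hq 2))).mul_const ((⟪x', v⟫ : ℝ))
  have HB := (((((auxpow hs 4).const_mul (-(15/44))).mul_const ((⟪x', x'⟫ : ℝ))).add
      ((((auxpow hs 2).const_mul (15/308)).mul_const ((⟪x', x'⟫ : ℝ)^2)).mul hq)).sub
      ((auxpow hq 2).const_mul ((3/4928) * (⟪x', x'⟫ : ℝ)^3))).mul (hl.const_mul 2)
  have H := HA.add HB
  erw [H.fderiv]
  simp
  ring

/-- the degree-6 polynomial on ℝ³⁶ is harmonic for every fixed x'. -/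
theorem harmonic_deg6_dim36 (x' : EuclideanSpace ℝ (Fin 36)) :
    let P : EuclideanSpace ℝ (Fin 36) → ℝ := fun x =>
      ⟪x, x'⟫ ^ 6 - (15 / 44) * ⟪x, x'⟫ ^ 4 * ⟪x', x'⟫ * ⟪x, x⟫
        + (15 / 616) * ⟪x, x'⟫ ^ 2 * ⟪x', x'⟫ ^ 2 * ⟪x, x⟫ ^ 2
        - (1 / 4928) * ⟪x', x'⟫ ^ 3 * ⟪x, x⟫ ^ 3
    ∀ x : EuclideanSpace ℝ (Fin 36),
      (∑ i : Fin 36,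
        fderiv ℝ (fun y => fderiv ℝ P y (EuclideanSpace.single i 1)) x
          (EuclideanSpace.single i 1)) = 0 := by
  intro P x
  have hPd : ∀ i : Fin 36,
      fderiv ℝ (fun y => fderiv ℝ P y (EuclideanSpace.single i 1)) x
          (EuclideanSpace.single i 1) =
      (30 * ⟪x, x'⟫ ^ 4 - (45/11) * ⟪x, x'⟫ ^ 2 * ⟪x', x'⟫ * ⟪x, x⟫
        + (15/308) * ⟪x', x'⟫ ^ 2 * ⟪x, x⟫ ^ 2) * (x' i * x' i)
      + 4 * (-(15/11) * ⟪x, x'⟫ ^ 3 * ⟪x', x'⟫ + (15/154) * ⟪x, x'⟫ * ⟪x', x'⟫ ^ 2 * ⟪x, x⟫)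
          * (x i * x' i)
      + 4 * ((15/308) * ⟪x, x'⟫ ^ 2 * ⟪x', x'⟫ ^ 2 - (3/2464) * ⟪x', x'⟫ ^ 3 * ⟪x, x⟫)
          * (x i * x i)
      + 2 * (-(15/44) * ⟪x, x'⟫ ^ 4 * ⟪x', x'⟫ + (15/308) * ⟪x, x'⟫ ^ 2 * ⟪x', x'⟫ ^ 2 * ⟪x, x⟫
        - (3/4928) * ⟪x', x'⟫ ^ 3 * ⟪x, x⟫ ^ 2) * 1 := by
    intro i
    have h1 : (fun y => fderiv ℝ P y (EuclideanSpace.single i 1)) = fun y =>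
      (6 * ⟪y, x'⟫ ^ 5 - (15 / 11) * ⟪y, x'⟫ ^ 3 * ⟪x', x'⟫ * ⟪y, y⟫
        + (15 / 308) * ⟪y, x'⟫ * ⟪x', x'⟫ ^ 2 * ⟪y, y⟫ ^ 2) * ⟪x', EuclideanSpace.single i 1⟫
      + (-(15 / 44) * ⟪y, x'⟫ ^ 4 * ⟪x', x'⟫ + (15 / 308) * ⟪y, x'⟫ ^ 2 * ⟪x', x'⟫ ^ 2 * ⟪y, y⟫
        - (3 / 4928) * ⟪x', x'⟫ ^ 3 * ⟪y, y⟫ ^ 2)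
          * (2 * ⟪y, EuclideanSpace.single i 1⟫) := by
      funext y
      exact fderivP x' y (EuclideanSpace.single i 1)
    rw [h1, fderiv2 x' (EuclideanSpace.single i 1) x]
    have h2 : (⟪x', EuclideanSpace.single i (1:ℝ)⟫ : ℝ) = x' i := by
      simp [EuclideanSpace.inner_single_right]
    have h3 : (⟪x, EuclideanSpace.single i (1:ℝ)⟫ : ℝ) = x i := by
      simp [EuclideanSpace.inner_single_right]
    have h4 : (⟪EuclideanSpace.single i (1:ℝ), EuclideanSpace.single i (1:ℝ)⟫ : ℝ) = 1 := by
      simp [EuclideanSpace.inner_single_right, EuclideanSpace.single_apply]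
    rw [h2, h3, h4]
  rw [Finset.sum_congr rfl fun i _ => hPd i]
  have hE : (∑ i : Fin 36, x' i * x' i) = ⟪x', x'⟫ := by
    simp only [PiLp.inner_apply, RCLike.inner_apply, conj_trivial]
  have hS : (∑ i : Fin 36, x i * x' i) = ⟪x, x'⟫ := by
    simp [PiLp.inner_apply, mul_comm]
  have hQ : (∑ i : Fin 36, x i * x i) = ⟪x, x⟫ := by
    simp only [PiLp.inner_apply, RCLike.inner_apply, conj_trivial]
  rw [Finset.sum_add_distrib, Finset.sum_add_distrib, Finset.sum_add_distrib,
    ← Finset.mul_sum, ← Finset.mul_sum, ← Finset.mul_sum, hE, hS, hQ,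
    Finset.sum_const, Finset.card_univ, Fintype.card_fin, nsmul_eq_mul]
  ring
end

section
/- The polynomial P(x) = (x,x')^8 - (7/11)(x,x')^6(x',x')(x,x) + (5/44)(x,x')^4(x',x')^2(x,x)^2 - (1/176)(x,x')^2(x',x')^3(x,x)^3 + (1/26752)(x',x')^4(x,x)^4 on R^32 is harmonic for every fixed x' ∈ R^32. -/
open scoped RealInnerProductSpace

namespace HarmAux

abbrev E32 := EuclideanSpace ℝ (Fin 32)

noncomputable def A (c u v : ℝ) : ℝ :=
  8*u^7 - (42/11)*c*u^5*v + (5/11)*c^2*u^3*v^2 - (1/88)*c^3*u*v^3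
noncomputable def B (c u v : ℝ) : ℝ :=
  (5/11)*c^2*u^4*v - (14/11)*c*u^6 - (3/88)*c^3*u^2*v^2 + (1/3344)*c^4*v^3
noncomputable def Au (c u v : ℝ) : ℝ :=
  56*u^6 - (210/11)*c*u^4*v + (15/11)*c^2*u^2*v^2 - (1/88)*c^3*v^3
noncomputable def Av (c u v : ℝ) : ℝ :=
  (10/11)*c^2*u^3*v - (42/11)*c*u^5 - (3/88)*c^3*u*v^2
noncomputable def Bu (c u v : ℝ) : ℝ :=
  (20/11)*c^2*u^3*v - (84/11)*c*u^5 - (3/44)*c^3*u*v^2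
noncomputable def Bv (c u v : ℝ) : ℝ :=
  (5/11)*c^2*u^4 - (3/44)*c^3*u^2*v + (3/3344)*c^4*v^2

lemma hpow {f : E32 → ℝ} {f' : E32 →L[ℝ] ℝ} {y : E32} (hf : HasFDerivAt f f' y) (n : ℕ) :
    HasFDerivAt (fun z => f z ^ n) (((n : ℝ) * f y ^ (n - 1)) • f') y :=
  (hasDerivAt_pow n (f y)).comp_hasFDerivAt y hf

lemma hasF (x' y : E32) :
    HasFDerivAt (fun x : E32 =>
      ⟪x, x'⟫ ^ 8 - (7 / 11) * ⟪x, x'⟫ ^ 6 * ⟪x', x'⟫ * ⟪x, x⟫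
        + (5 / 44) * ⟪x, x'⟫ ^ 4 * ⟪x', x'⟫ ^ 2 * ⟪x, x⟫ ^ 2
        - (1 / 176) * ⟪x, x'⟫ ^ 2 * ⟪x', x'⟫ ^ 3 * ⟪x, x⟫ ^ 3
        + (1 / 26752) * ⟪x', x'⟫ ^ 4 * ⟪x, x⟫ ^ 4)
      (A ⟪x',x'⟫ ⟪y,x'⟫ ⟪y,y⟫ • (innerSL ℝ x') + B ⟪x',x'⟫ ⟪y,x'⟫ ⟪y,y⟫ • (innerSL ℝ y)) y := by
  have hu : HasFDerivAt (fun z : E32 => ⟪z, x'⟫) _ y :=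
    (hasFDerivAt_id y).inner ℝ (hasFDerivAt_const x' y)
  have hv : HasFDerivAt (fun z : E32 => ⟪z, z⟫) _ y :=
    (hasFDerivAt_id y).inner ℝ (hasFDerivAt_id y)
  have hcomb := ((((hpow hu 8).sub
      ((((hpow hu 6).const_mul (7/11 : ℝ)).mul_const (⟪x',x'⟫ : ℝ)).mul hv)).add
      ((((hpow hu 4).const_mul (5/44 : ℝ)).mul_const ((⟪x',x'⟫ : ℝ)^2)).mul (hpow hv 2))).sub
      ((((hpow hu 2).const_mul (1/176 : ℝ)).mul_const ((⟪x',x'⟫ : ℝ)^3)).mul (hpow hv 3))).add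
      ((hpow hv 4).const_mul ((1/26752 : ℝ) * (⟪x',x'⟫ : ℝ)^4))
  refine hcomb.congr_fderiv ?_
  ext w
  simp only [ContinuousLinearMap.add_apply, ContinuousLinearMap.sub_apply,
    ContinuousLinearMap.smul_apply, ContinuousLinearMap.coe_comp', Function.comp_apply,
    ContinuousLinearMap.prod_apply, ContinuousLinearMap.coe_id', id_eq,
    ContinuousLinearMap.zero_apply, fderivInnerCLM_apply, innerSL_apply_apply,
    inner_zero_right, smul_eq_mul]
  rw [real_inner_comm w x', real_inner_comm w y]
  simp only [A, B]
  ring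

lemma hasG (c : ℝ) (x' x w : E32) :
    HasFDerivAt (fun y : E32 => A c ⟪y,x'⟫ ⟪y,y⟫ * ⟪x', w⟫ + B c ⟪y,x'⟫ ⟪y,y⟫ * ⟪y, w⟫)
      ((Au c ⟪x,x'⟫ ⟪x,x⟫ * ⟪x',w⟫ + Bu c ⟪x,x'⟫ ⟪x,x⟫ * ⟪x,w⟫) • innerSL ℝ x'
        + ((2 * Av c ⟪x,x'⟫ ⟪x,x⟫) * ⟪x',w⟫ + (2 * Bv c ⟪x,x'⟫ ⟪x,x⟫) * ⟪x,w⟫) • innerSL ℝ x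
        + (B c ⟪x,x'⟫ ⟪x,x⟫) • innerSL ℝ w) x := by
  have hu : HasFDerivAt (fun z : E32 => ⟪z, x'⟫) _ x :=
    (hasFDerivAt_id x).inner ℝ (hasFDerivAt_const x' x)
  have hv : HasFDerivAt (fun z : E32 => ⟪z, z⟫) _ x :=
    (hasFDerivAt_id x).inner ℝ (hasFDerivAt_id x)
  have hw : HasFDerivAt (fun z : E32 => ⟪z, w⟫) _ x :=
    (hasFDerivAt_id x).inner ℝ (hasFDerivAt_const w x)
  have hA : HasFDerivAt (fun z : E32 => A c ⟪z,x'⟫ ⟪z,z⟫) _ x :=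
    (((((hpow hu 7).const_mul (8 : ℝ)).sub
      (((hpow hu 5).const_mul ((42/11 : ℝ)*c)).mul hv)).add
      (((hpow hu 3).const_mul ((5/11 : ℝ)*c^2)).mul (hpow hv 2))).sub
      ((hu.const_mul ((1/88 : ℝ)*c^3)).mul (hpow hv 3)))
  have hB : HasFDerivAt (fun z : E32 => B c ⟪z,x'⟫ ⟪z,z⟫) _ x :=
    (((((hpow hu 4).const_mul ((5/11 : ℝ)*c^2)).mul hv).sub
      ((hpow hu 6).const_mul ((14/11 : ℝ)*c))).sub
      (((hpow hu 2).const_mul ((3/88 : ℝ)*c^3)).mul (hpow hv 2))).add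
      ((hpow hv 3).const_mul ((1/3344 : ℝ)*c^4))
  have hcomb := (hA.mul_const (⟪x', w⟫ : ℝ)).add (hB.mul hw)
  refine hcomb.congr_fderiv ?_
  ext h
  simp only [ContinuousLinearMap.add_apply, ContinuousLinearMap.sub_apply,
    ContinuousLinearMap.smul_apply, ContinuousLinearMap.coe_comp', Function.comp_apply,
    ContinuousLinearMap.prod_apply, ContinuousLinearMap.coe_id', id_eq,
    ContinuousLinearMap.zero_apply, fderivInnerCLM_apply, innerSL_apply_apply,
    inner_zero_right, smul_eq_mul]
  rw [real_inner_comm h x', real_inner_comm h x, real_inner_comm h w]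
  simp only [A, B, Au, Av, Bu, Bv]
  ring

end HarmAux

open HarmAux

/-- the degree-8 polynomial on ℝ³² is harmonic for every fixed x'. -/
theorem harmonic_deg8_dim32 (x' : EuclideanSpace ℝ (Fin 32)) :
    let P : EuclideanSpace ℝ (Fin 32) → ℝ := fun x =>
      ⟪x, x'⟫ ^ 8 - (7 / 11) * ⟪x, x'⟫ ^ 6 * ⟪x', x'⟫ * ⟪x, x⟫
        + (5 / 44) * ⟪x, x'⟫ ^ 4 * ⟪x', x'⟫ ^ 2 * ⟪x, x⟫ ^ 2
        - (1 / 176) * ⟪x, x'⟫ ^ 2 * ⟪x', x'⟫ ^ 3 * ⟪x, x⟫ ^ 3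
        + (1 / 26752) * ⟪x', x'⟫ ^ 4 * ⟪x, x⟫ ^ 4
    ∀ x : EuclideanSpace ℝ (Fin 32),
      (∑ i : Fin 32,
        fderiv ℝ (fun y => fderiv ℝ P y (EuclideanSpace.single i 1)) x
          (EuclideanSpace.single i 1)) = 0 := by
  intro P x
  set c : ℝ := ⟪x', x'⟫ with hc
  set u : ℝ := ⟪x, x'⟫ with hu
  set v : ℝ := ⟪x, x⟫ with hv
  have key : ∀ i : Fin 32,
      fderiv ℝ (fun y => fderiv ℝ P y (EuclideanSpace.single i 1)) x
        (EuclideanSpace.single i 1)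
      = (Au c u v * ⟪x', EuclideanSpace.single i 1⟫
            + Bu c u v * ⟪x, EuclideanSpace.single i 1⟫) * ⟪x', EuclideanSpace.single i 1⟫
        + ((2 * Av c u v) * ⟪x', EuclideanSpace.single i 1⟫
            + (2 * Bv c u v) * ⟪x, EuclideanSpace.single i 1⟫) * ⟪x, EuclideanSpace.single i 1⟫
        + B c u v * ⟪(EuclideanSpace.single i 1 : E32), EuclideanSpace.single i 1⟫ := by
    intro i
    have hfun : (fun y => fderiv ℝ P y (EuclideanSpace.single i 1))
        = (fun y : E32 => A c ⟪y,x'⟫ ⟪y,y⟫ * ⟪x', EuclideanSpace.single i 1⟫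
            + B c ⟪y,x'⟫ ⟪y,y⟫ * ⟪y, EuclideanSpace.single i 1⟫) := by
      funext y
      rw [show P = fun x : E32 =>
        ⟪x, x'⟫ ^ 8 - (7 / 11) * ⟪x, x'⟫ ^ 6 * ⟪x', x'⟫ * ⟪x, x⟫
          + (5 / 44) * ⟪x, x'⟫ ^ 4 * ⟪x', x'⟫ ^ 2 * ⟪x, x⟫ ^ 2
          - (1 / 176) * ⟪x, x'⟫ ^ 2 * ⟪x', x'⟫ ^ 3 * ⟪x, x⟫ ^ 3
          + (1 / 26752) * ⟪x', x'⟫ ^ 4 * ⟪x, x⟫ ^ 4 from rfl]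
      rw [(hasF x' y).fderiv]
      simp [hc]
    rw [hfun, (hasG c x' x (EuclideanSpace.single i 1)).fderiv]
    simp [hu, hv]
  rw [Finset.sum_congr rfl (fun i _ => key i)]
  have e1 : ∀ i : Fin 32, (⟪x', EuclideanSpace.single i 1⟫ : ℝ) = x' i := by
    intro i; simp [EuclideanSpace.inner_single_right]
  have e2 : ∀ i : Fin 32, (⟪x, EuclideanSpace.single i 1⟫ : ℝ) = x i := by
    intro i; simp [EuclideanSpace.inner_single_right]
  have e3 : ∀ i : Fin 32,
      (⟪(EuclideanSpace.single i 1 : E32), EuclideanSpace.single i 1⟫ : ℝ) = 1 := by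
    intro i; simp [EuclideanSpace.inner_single_right, EuclideanSpace.single_apply]
  have step : ∀ i : Fin 32,
      (Au c u v * ⟪x', EuclideanSpace.single i 1⟫
            + Bu c u v * ⟪x, EuclideanSpace.single i 1⟫) * ⟪x', EuclideanSpace.single i 1⟫
        + ((2 * Av c u v) * ⟪x', EuclideanSpace.single i 1⟫
            + (2 * Bv c u v) * ⟪x, EuclideanSpace.single i 1⟫) * ⟪x, EuclideanSpace.single i 1⟫
        + B c u v * ⟪(EuclideanSpace.single i 1 : E32), EuclideanSpace.single i 1⟫
      = Au c u v * (x' i * x' i) + (Bu c u v + 2 * Av c u v) * (x' i * x i)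
        + (2 * Bv c u v) * (x i * x i) + B c u v := by
    intro i; rw [e1, e2, e3]; ring
  rw [Finset.sum_congr rfl (fun i _ => step i)]
  have s1 : ∑ i : Fin 32, x' i * x' i = c := by
    rw [hc]; simp [PiLp.inner_apply, RCLike.inner_apply, conj_trivial, -inner_self_eq_norm_sq_to_K]
  have s2 : ∑ i : Fin 32, x' i * x i = u := by
    rw [hu]; simp [PiLp.inner_apply, RCLike.inner_apply, conj_trivial, mul_comm]
  have s3 : ∑ i : Fin 32, x i * x i = v := by
    rw [hv]; simp [PiLp.inner_apply, RCLike.inner_apply, conj_trivial, -inner_self_eq_norm_sq_to_K]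
  rw [Finset.sum_add_distrib, Finset.sum_add_distrib, Finset.sum_add_distrib,
    ← Finset.mul_sum, ← Finset.mul_sum, ← Finset.mul_sum, Finset.sum_const,
    s1, s2, s3]
  simp only [A, B, Au, Av, Bu, Bv, Finset.card_univ, Fintype.card_fin, nsmul_eq_mul]
  ring
end

section
/- The polynomial P(x) = (x,x')^8 - (7/15)(x,x')^6(x',x')(x,x) + (7/116)(x,x')^4(x',x')^2(x,x)^2 - (1/464)(x,x')^2(x',x')^3(x,x)^3 + (1/100224)(x',x')^4(x,x)^4 on R^48 is harmonic for every fixed x' ∈ R^48. -/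
open scoped RealInnerProductSpace

theorem HasFDerivAt.rpowNat {E : Type*} [NormedAddCommGroup E] [NormedSpace ℝ E]
    {f : E → ℝ} {f' : E →L[ℝ] ℝ} {x : E} (h : HasFDerivAt f f' x) (n : ℕ) :
    HasFDerivAt (fun y => f y ^ n) (((n : ℝ) * f x ^ (n - 1)) • f') x := by
  induction n with
  | zero => simpa using hasFDerivAt_const (1 : ℝ) x
  | succ n ih =>
      have h2 : HasFDerivAt (fun y => f y ^ n * f y)
          (f x ^ n • f' + f x • (((n : ℝ) * f x ^ (n - 1)) • f')) x := ih.mul h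
      have h3 : (fun y => f y ^ n * f y) = fun y => f y ^ (n + 1) := by
        funext y; rw [pow_succ]
      rw [h3] at h2
      refine h2.congr_fderiv ?_
      ext v
      simp only [ContinuousLinearMap.add_apply, ContinuousLinearMap.smul_apply, smul_eq_mul]
      cases n with
      | zero => norm_num
      | succ m => simp only [Nat.add_sub_cancel, Nat.succ_sub_one]; push_cast; ring

variable {E : Type*} [NormedAddCommGroup E] [InnerProductSpace ℝ E]

theorem hasFDerivAt_inner_const' (x' y : E) :
    HasFDerivAt (fun z : E => ⟪z, x'⟫) (innerSL ℝ x') y := by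
  have h := (hasFDerivAt_id y).inner ℝ (hasFDerivAt_const x' y)
  refine h.congr_fderiv ?_
  ext v
  simp [real_inner_comm]

theorem hasFDerivAt_inner_self' (y : E) :
    HasFDerivAt (fun z : E => ⟪z, z⟫) ((2 : ℝ) • innerSL ℝ y) y := by
  have h := (hasFDerivAt_id y).inner ℝ (hasFDerivAt_id y)
  refine h.congr_fderiv ?_
  ext v
  simp [real_inner_comm]
  ring

/-- the degree-8 polynomial on ℝ⁴⁸ is harmonic for every fixed x'. -/
theorem harmonic_deg8_dim48 (x' : EuclideanSpace ℝ (Fin 48)) :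
    let P : EuclideanSpace ℝ (Fin 48) → ℝ := fun x =>
      ⟪x, x'⟫ ^ 8 - (7 / 15) * ⟪x, x'⟫ ^ 6 * ⟪x', x'⟫ * ⟪x, x⟫
        + (7 / 116) * ⟪x, x'⟫ ^ 4 * ⟪x', x'⟫ ^ 2 * ⟪x, x⟫ ^ 2
        - (1 / 464) * ⟪x, x'⟫ ^ 2 * ⟪x', x'⟫ ^ 3 * ⟪x, x⟫ ^ 3
        + (1 / 100224) * ⟪x', x'⟫ ^ 4 * ⟪x, x⟫ ^ 4
    ∀ x : EuclideanSpace ℝ (Fin 48),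
      (∑ i : Fin 48,
        fderiv ℝ (fun y => fderiv ℝ P y (EuclideanSpace.single i 1)) x
          (EuclideanSpace.single i 1)) = 0 := by
  intro P x
  have hP : P = fun x : EuclideanSpace ℝ (Fin 48) =>
      ⟪x, x'⟫ ^ 8 - (7 / 15) * ⟪x, x'⟫ ^ 6 * ⟪x', x'⟫ * ⟪x, x⟫
        + (7 / 116) * ⟪x, x'⟫ ^ 4 * ⟪x', x'⟫ ^ 2 * ⟪x, x⟫ ^ 2
        - (1 / 464) * ⟪x, x'⟫ ^ 2 * ⟪x', x'⟫ ^ 3 * ⟪x, x⟫ ^ 3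
        + (1 / 100224) * ⟪x', x'⟫ ^ 4 * ⟪x, x⟫ ^ 4 := rfl
  -- first derivative
  have hPfd : ∀ y v : EuclideanSpace ℝ (Fin 48),
      fderiv ℝ P y v =
      (8 * ⟪y, x'⟫ ^ 7 - 42 / 15 * ⟪y, x'⟫ ^ 5 * ⟪x', x'⟫ * ⟪y, y⟫
        + 28 / 116 * ⟪y, x'⟫ ^ 3 * ⟪x', x'⟫ ^ 2 * ⟪y, y⟫ ^ 2
        - 2 / 464 * ⟪y, x'⟫ * ⟪x', x'⟫ ^ 3 * ⟪y, y⟫ ^ 3) * ⟪x', v⟫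
      + (-(14 / 15) * ⟪y, x'⟫ ^ 6 * ⟪x', x'⟫ + 28 / 116 * ⟪y, x'⟫ ^ 4 * ⟪x', x'⟫ ^ 2 * ⟪y, y⟫
        - 6 / 464 * ⟪y, x'⟫ ^ 2 * ⟪x', x'⟫ ^ 3 * ⟪y, y⟫ ^ 2
        + 8 / 100224 * ⟪x', x'⟫ ^ 4 * ⟪y, y⟫ ^ 3) * ⟪y, v⟫ := by
    intro y v
    have ht := hasFDerivAt_inner_const' x' y
    have hs := hasFDerivAt_inner_self' y
    have hbig := ((((ht.rpowNat 8).sub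
        ((((ht.rpowNat 6).const_mul (7 / 15)).mul_const ⟪x', x'⟫).mul hs)).add
        ((((ht.rpowNat 4).const_mul (7 / 116)).mul_const (⟪x', x'⟫ ^ 2)).mul (hs.rpowNat 2))).sub
        ((((ht.rpowNat 2).const_mul (1 / 464)).mul_const (⟪x', x'⟫ ^ 3)).mul (hs.rpowNat 3))).add
        ((hs.rpowNat 4).const_mul ((1 / 100224) * ⟪x', x'⟫ ^ 4))
    simp only [Pi.add_def, Pi.sub_def, Pi.mul_def] at hbig
    rw [hP, hbig.fderiv]
    simp only [ContinuousLinearMap.add_apply, ContinuousLinearMap.sub_apply,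
      ContinuousLinearMap.smul_apply, smul_eq_mul, innerSL_apply_apply]
    norm_num
    ring
  -- second derivative in a fixed direction
  have key2 : ∀ v : EuclideanSpace ℝ (Fin 48),
      fderiv ℝ (fun y => fderiv ℝ P y v) x v =
      (56 * ⟪x, x'⟫ ^ 6 - 14 * ⟪x, x'⟫ ^ 4 * ⟪x', x'⟫ * ⟪x, x⟫
        + 84 / 116 * ⟪x, x'⟫ ^ 2 * ⟪x', x'⟫ ^ 2 * ⟪x, x⟫ ^ 2
        - 2 / 464 * ⟪x', x'⟫ ^ 3 * ⟪x, x⟫ ^ 3) * (⟪x', v⟫ * ⟪x', v⟫)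
      + (-(168 / 15) * ⟪x, x'⟫ ^ 5 * ⟪x', x'⟫ + 224 / 116 * ⟪x, x'⟫ ^ 3 * ⟪x', x'⟫ ^ 2 * ⟪x, x⟫
        - 24 / 464 * ⟪x, x'⟫ * ⟪x', x'⟫ ^ 3 * ⟪x, x⟫ ^ 2) * (⟪x, v⟫ * ⟪x', v⟫)
      + (56 / 116 * ⟪x, x'⟫ ^ 4 * ⟪x', x'⟫ ^ 2 - 24 / 464 * ⟪x, x'⟫ ^ 2 * ⟪x', x'⟫ ^ 3 * ⟪x, x⟫
        + 48 / 100224 * ⟪x', x'⟫ ^ 4 * ⟪x, x⟫ ^ 2) * (⟪x, v⟫ * ⟪x, v⟫)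
      + (-(14 / 15) * ⟪x, x'⟫ ^ 6 * ⟪x', x'⟫ + 28 / 116 * ⟪x, x'⟫ ^ 4 * ⟪x', x'⟫ ^ 2 * ⟪x, x⟫
        - 6 / 464 * ⟪x, x'⟫ ^ 2 * ⟪x', x'⟫ ^ 3 * ⟪x, x⟫ ^ 2
        + 8 / 100224 * ⟪x', x'⟫ ^ 4 * ⟪x, x⟫ ^ 3) * ⟪v, v⟫ := by
    intro v
    have hfun : (fun y => fderiv ℝ P y v) = fun y : EuclideanSpace ℝ (Fin 48) =>
        (8 * ⟪y, x'⟫ ^ 7 - 42 / 15 * ⟪y, x'⟫ ^ 5 * ⟪x', x'⟫ * ⟪y, y⟫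
          + 28 / 116 * ⟪y, x'⟫ ^ 3 * ⟪x', x'⟫ ^ 2 * ⟪y, y⟫ ^ 2
          - 2 / 464 * ⟪y, x'⟫ * ⟪x', x'⟫ ^ 3 * ⟪y, y⟫ ^ 3) * ⟪x', v⟫
        + (-(14 / 15) * ⟪y, x'⟫ ^ 6 * ⟪x', x'⟫ + 28 / 116 * ⟪y, x'⟫ ^ 4 * ⟪x', x'⟫ ^ 2 * ⟪y, y⟫
          - 6 / 464 * ⟪y, x'⟫ ^ 2 * ⟪x', x'⟫ ^ 3 * ⟪y, y⟫ ^ 2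
          + 8 / 100224 * ⟪x', x'⟫ ^ 4 * ⟪y, y⟫ ^ 3) * ⟪y, v⟫ :=
      funext fun y => hPfd y v
    have ht := hasFDerivAt_inner_const' x' x
    have hs := hasFDerivAt_inner_self' x
    have hv := hasFDerivAt_inner_const' v x
    have hc1 := (((ht.rpowNat 7).const_mul 8).sub
        ((((ht.rpowNat 5).const_mul (42 / 15)).mul_const ⟪x', x'⟫).mul hs)).add
        ((((ht.rpowNat 3).const_mul (28 / 116)).mul_const (⟪x', x'⟫ ^ 2)).mul (hs.rpowNat 2)) |>.sub
        (((ht.const_mul (2 / 464)).mul_const (⟪x', x'⟫ ^ 3)).mul (hs.rpowNat 3))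
    have hc2 := ((((ht.rpowNat 6).const_mul (-(14 / 15))).mul_const ⟪x', x'⟫).add
        ((((ht.rpowNat 4).const_mul (28 / 116)).mul_const (⟪x', x'⟫ ^ 2)).mul hs)).sub
        ((((ht.rpowNat 2).const_mul (6 / 464)).mul_const (⟪x', x'⟫ ^ 3)).mul (hs.rpowNat 2)) |>.add
        ((hs.rpowNat 3).const_mul (8 / 100224 * ⟪x', x'⟫ ^ 4))
    have hF := (hc1.mul_const ⟪x', v⟫).add (hc2.mul hv)
    simp only [Pi.add_def, Pi.sub_def, Pi.mul_def] at hF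
    rw [hfun, hF.fderiv]
    simp only [ContinuousLinearMap.add_apply, ContinuousLinearMap.sub_apply,
      ContinuousLinearMap.smul_apply, smul_eq_mul, innerSL_apply_apply]
    norm_num
    ring
  have h1 : ∀ i : Fin 48,
      fderiv ℝ (fun y => fderiv ℝ P y (EuclideanSpace.single i 1)) x
        (EuclideanSpace.single i 1) =
      (56 * ⟪x, x'⟫ ^ 6 - 14 * ⟪x, x'⟫ ^ 4 * ⟪x', x'⟫ * ⟪x, x⟫
        + 84 / 116 * ⟪x, x'⟫ ^ 2 * ⟪x', x'⟫ ^ 2 * ⟪x, x⟫ ^ 2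
        - 2 / 464 * ⟪x', x'⟫ ^ 3 * ⟪x, x⟫ ^ 3) * (x' i * x' i)
      + (-(168 / 15) * ⟪x, x'⟫ ^ 5 * ⟪x', x'⟫ + 224 / 116 * ⟪x, x'⟫ ^ 3 * ⟪x', x'⟫ ^ 2 * ⟪x, x⟫
        - 24 / 464 * ⟪x, x'⟫ * ⟪x', x'⟫ ^ 3 * ⟪x, x⟫ ^ 2) * (x i * x' i)
      + (56 / 116 * ⟪x, x'⟫ ^ 4 * ⟪x', x'⟫ ^ 2 - 24 / 464 * ⟪x, x'⟫ ^ 2 * ⟪x', x'⟫ ^ 3 * ⟪x, x⟫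
        + 48 / 100224 * ⟪x', x'⟫ ^ 4 * ⟪x, x⟫ ^ 2) * (x i * x i)
      + (-(14 / 15) * ⟪x, x'⟫ ^ 6 * ⟪x', x'⟫ + 28 / 116 * ⟪x, x'⟫ ^ 4 * ⟪x', x'⟫ ^ 2 * ⟪x, x⟫
        - 6 / 464 * ⟪x, x'⟫ ^ 2 * ⟪x', x'⟫ ^ 3 * ⟪x, x⟫ ^ 2
        + 8 / 100224 * ⟪x', x'⟫ ^ 4 * ⟪x, x⟫ ^ 3) := by
    intro i
    rw [key2]
    have e1 : (⟪x', EuclideanSpace.single i (1 : ℝ)⟫ : ℝ) = x' i := by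
      rw [EuclideanSpace.inner_single_right]; simp
    have e2 : (⟪x, EuclideanSpace.single i (1 : ℝ)⟫ : ℝ) = x i := by
      rw [EuclideanSpace.inner_single_right]; simp
    have e3 : (⟪EuclideanSpace.single i (1 : ℝ), EuclideanSpace.single i (1 : ℝ)⟫ : ℝ) = 1 := by
      rw [EuclideanSpace.inner_single_right]; simp [EuclideanSpace.single_apply]
    rw [e1, e2, e3]
    ring
  simp only [h1]
  simp only [Finset.sum_add_distrib, ← Finset.mul_sum, Finset.sum_const, Finset.card_univ,
    Fintype.card_fin, nsmul_eq_mul]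
  have e1 : (⟪x', x'⟫ : ℝ) = ∑ i, x' i * x' i := by
    simp only [PiLp.inner_apply, RCLike.inner_apply, conj_trivial, mul_comm]
  have e2 : (⟪x, x'⟫ : ℝ) = ∑ i, x i * x' i := by
    simp only [PiLp.inner_apply, RCLike.inner_apply, conj_trivial, mul_comm]
  have e3 : (⟪x, x⟫ : ℝ) = ∑ i, x i * x i := by
    simp only [PiLp.inner_apply, RCLike.inner_apply, conj_trivial, mul_comm]
  rw [← e1, ← e2, ← e3]
  ring
end

section
/- Suppose s > 0 is real and N satisfies 1344s - 1008s² + 168s³ ≤ N ≤ (-258048 + 201600s - 44352s² + 4032s³)/(5s - 22), where 5s - 22 > 0. Then s ≤ 8. -/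
/-- the rank-24 bound: if `s > 0` with `5s - 22 > 0` and some real
`N` satisfies `1344s - 1008s² + 168s³ ≤ N ≤ (-258048 + 201600s - 44352s² + 4032s³)/(5s - 22)`,
then `s ≤ 8`. -/
theorem rank24_s_le_eight (s N : ℝ) (hs : 0 < s) (hd : 0 < 5 * s - 22)
    (hlow : 1344 * s - 1008 * s ^ 2 + 168 * s ^ 3 ≤ N)
    (hhigh : N ≤ (-258048 + 201600 * s - 44352 * s ^ 2 + 4032 * s ^ 3) / (5 * s - 22)) :
    s ≤ 8 := by
  have h := hlow.trans hhigh
  rw [le_div_iff₀ hd] at h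
  by_contra hc
  push_neg at hc
  nlinarith [sq_nonneg (s - 8), sq_nonneg (s - 4), mul_pos (sub_pos.2 hc) (sub_pos.2 hc), sq_nonneg s, mul_pos hs hd]
end

section
/- In a 24-dimensional Euclidean space there is no root system (with all roots of equal length) consisting of exactly 3024 roots such that each irreducible component is of type A, D, or E with all roots of the same norm; more precisely, 3024 cannot be written as a sum of root-counts n_i(n_i+1) (type A_{n_i}), 2n_i(n_i−1) (type D_{n_i}), 72 (E_6), 126 (E_7), 240 (E_8) with total rank ∑ rank ≤ 24. -/
/-- there is no simply-laced root system in dimension 24 with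
exactly 3024 roots: 3024 cannot be written as a sum of root-counts of
irreducible ADE components (`A_n`: `n(n+1)` roots of rank `n`; `D_n`, `n ≥ 4`:
`2n(n-1)` roots of rank `n`; `E₆`: 72 roots of rank 6; `E₇`: 126 roots of rank
7; `E₈`: 240 roots of rank 8) with total rank at most 24. -/
theorem no_root_system_3024_roots_rank24 :
    ¬ ∃ (k : ℕ) (rank roots : Fin k → ℕ),
      (∀ i,
        (∃ n : ℕ, 1 ≤ n ∧ rank i = n ∧ roots i = n * (n + 1)) ∨
        (∃ n : ℕ, 4 ≤ n ∧ rank i = n ∧ roots i = 2 * n * (n - 1)) ∨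
        (rank i = 6 ∧ roots i = 72) ∨
        (rank i = 7 ∧ roots i = 126) ∨
        (rank i = 8 ∧ roots i = 240)) ∧
      (∑ i, rank i) ≤ 24 ∧ (∑ i, roots i) = 3024 := by
  rintro ⟨k, rank, roots, h, hr, hs⟩
  have hle : ∀ i, roots i ≤ 46 * rank i := by
    intro i
    have hri : rank i ≤ 24 :=
      le_trans (Finset.single_le_sum (fun j _ => Nat.zero_le _) (Finset.mem_univ i)) hr
    rcases h i with ⟨n, h1, h2, h3⟩ | ⟨n, h1, h2, h3⟩ | ⟨h2, h3⟩ | ⟨h2, h3⟩ | ⟨h2, h3⟩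
    · rw [h2] at hri ⊢; rw [h3]; nlinarith
    · rw [h2] at hri ⊢; rw [h3]
      have h4 : n - 1 + 1 = n := Nat.sub_add_cancel (by omega)
      nlinarith [h4]
    all_goals simp_all
  have hsum : (∑ i, roots i) ≤ 46 * ∑ i, rank i := by
    rw [Finset.mul_sum]
    exact Finset.sum_le_sum fun i _ => hle i
  omega
end
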